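/- arXiv:1710.09606 — 2 statements merged into one kernel-verified Lean document; each statement's English description precedes it below -/
import Mathlib

section
/- Let B ⊆ 𝔽ⁿ be a finite P-independent set and let b ∈ 𝔽ⁿ with b ∉ B̄. Then there exists F ∈ R with F ∈ I(B), F ∉ I(B ∪ {b}) (i.e., F vanishes on all of B but F(b) ≠ 0), and deg(F) ≤ |B|. -/
/- Common setup: free multivariate skew polynomial rings over a division ring. -/

open Matrix Finsupp

/-- The underlying left `𝔽`-module of the free multivariate skew polynomial ring:
the free left `𝔽`-module with basis the free monoid on `n` symbols. -/
abbrev SkewPoly (𝔽 : Type*) [DivisionRing 𝔽] (n : ℕ) : Type _ := FreeMonoid (Fin n) →₀ 𝔽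

namespace SkewPoly

variable {𝔽 : Type*} [DivisionRing 𝔽] {n : ℕ}

/-- The variable `xᵢ` as a skew polynomial. -/
noncomputable def X (𝔽 : Type*) [DivisionRing 𝔽] {n : ℕ} (i : Fin n) : SkewPoly 𝔽 n :=
  Finsupp.single (FreeMonoid.of i) 1

/-- The constant `a` as a skew polynomial (coefficient on the empty word). -/
noncomputable def C {𝔽 : Type*} [DivisionRing 𝔽] (n : ℕ) (a : 𝔽) :
    SkewPoly 𝔽 n := Finsupp.single 1 a

/-- The degree of a skew polynomial: the maximal length of a word in its support
(`⊥` for the zero polynomial). -/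
noncomputable def deg (F : SkewPoly 𝔽 n) : WithBot ℕ :=
  F.support.sup fun m => ((FreeMonoid.length m : ℕ) : WithBot ℕ)

/-- A matrix morphism `σ : 𝔽 → Mₙ(𝔽)`: a unital ring homomorphism. -/
def IsMatrixMorphism (σ : 𝔽 → Matrix (Fin n) (Fin n) 𝔽) : Prop :=
  σ 1 = 1 ∧ (∀ a b : 𝔽, σ (a + b) = σ a + σ b) ∧ (∀ a b : 𝔽, σ (a * b) = σ a * σ b)

/-- A `σ`-vector derivation `δ : 𝔽 → 𝔽ⁿ`: additive with `δ(ab) = σ(a)δ(b) + δ(a)b`. -/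
def IsVectorDerivation (σ : 𝔽 → Matrix (Fin n) (Fin n) 𝔽) (δ : 𝔽 → Fin n → 𝔽) : Prop :=
  (∀ a b : 𝔽, δ (a + b) = δ a + δ b) ∧
    (∀ a b : 𝔽, δ (a * b) = σ a *ᵥ δ b + fun i => δ a i * b)

/-- A multiplication on the free module `SkewPoly 𝔽 n` making it a ring (with the
existing addition) whose identity is the empty word, which restricts to concatenation
on monomials, is additive on degrees of nonzero elements, and for which left
multiplication by constants is scalar multiplication. -/
structure RawMul (𝔽 : Type*) [DivisionRing 𝔽] (n : ℕ) where
  /-- the multiplication -/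
  mul : SkewPoly 𝔽 n → SkewPoly 𝔽 n → SkewPoly 𝔽 n
  mul_add : ∀ F G H : SkewPoly 𝔽 n, mul F (G + H) = mul F G + mul F H
  add_mul : ∀ F G H : SkewPoly 𝔽 n, mul (F + G) H = mul F H + mul G H
  mul_assoc : ∀ F G H : SkewPoly 𝔽 n, mul (mul F G) H = mul F (mul G H)
  one_mul : ∀ F : SkewPoly 𝔽 n, mul (C n 1) F = F
  mul_one : ∀ F : SkewPoly 𝔽 n, mul F (C n 1) = F
  mono_mul_mono : ∀ m m' : FreeMonoid (Fin n),
    mul (Finsupp.single m 1) (Finsupp.single m' 1) = Finsupp.single (m * m') 1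
  const_mul : ∀ (a : 𝔽) (F : SkewPoly 𝔽 n), mul (C n a) F = a • F
  deg_mul : ∀ F G : SkewPoly 𝔽 n, F ≠ 0 → G ≠ 0 → deg (mul F G) = deg F + deg G

/-- The multiplication `S` satisfies the commutation rule
`xᵢ a = Σⱼ σ_{i,j}(a) xⱼ + δᵢ(a)`. -/
def HasCommRule (S : RawMul 𝔽 n) (σ : 𝔽 → Matrix (Fin n) (Fin n) 𝔽)
    (δ : 𝔽 → Fin n → 𝔽) : Prop :=
  ∀ (i : Fin n) (a : 𝔽),
    S.mul (X 𝔽 i) (C n a) =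
      (∑ j : Fin n, Finsupp.single (FreeMonoid.of j) (σ a i j)) + C n (δ a i)

/-- `F = Σᵢ Gᵢ (xᵢ - aᵢ) + b`, i.e. `b` is a remainder of `F` upon right division
by `x₁ - a₁, …, xₙ - aₙ`; equivalently `F - b` lies in the left ideal generated by
the `xᵢ - aᵢ`. -/
def Decomposes (S : RawMul 𝔽 n) (a : Fin n → 𝔽) (F : SkewPoly 𝔽 n) (b : 𝔽) : Prop :=
  ∃ G : Fin n → SkewPoly 𝔽 n,
    F = (∑ i : Fin n, S.mul (G i) (X 𝔽 i - C n (a i))) + C n b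

/-- The evaluation of `F` at the point `a`: the unique `b ∈ 𝔽` such that `F - b`
lies in the left ideal generated by `x₁ - a₁, …, xₙ - aₙ`. -/
noncomputable def eval (S : RawMul 𝔽 n) (a : Fin n → 𝔽) (F : SkewPoly 𝔽 n) : 𝔽 :=
  letI := Classical.propDecidable (∃ b : 𝔽, Decomposes S a F b)
  if h : ∃ b : 𝔽, Decomposes S a F b then h.choose else 0

/-- The `(σ,δ)`-conjugate `a^c = σ(c) a c⁻¹ + δ(c) c⁻¹` of `a` with respect to `c`. -/
noncomputable def conj (σ : 𝔽 → Matrix (Fin n) (Fin n) 𝔽) (δ : 𝔽 → Fin n → 𝔽)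
    (a : Fin n → 𝔽) (c : 𝔽) : Fin n → 𝔽 :=
  fun i => (σ c *ᵥ a) i * c⁻¹ + δ c i * c⁻¹

/-- `I(Ω)`: the set of skew polynomials vanishing at every point of `Ω`. -/
def zeroIdeal (S : RawMul 𝔽 n) (Ω : Set (Fin n → 𝔽)) : Set (SkewPoly 𝔽 n) :=
  {F | ∀ a ∈ Ω, eval S a F = 0}

/-- The left ideal of `SkewPoly 𝔽 n` generated by `x₁ - a₁, …, xₙ - aₙ`
(the set of sums of left multiples of the generators). -/
def pointIdeal (S : RawMul 𝔽 n) (a : Fin n → 𝔽) : Set (SkewPoly 𝔽 n) :=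
  {F | ∃ G : Fin n → SkewPoly 𝔽 n, F = ∑ i : Fin n, S.mul (G i) (X 𝔽 i - C n (a i))}

/-- The P-closure `Ω̄ = Z(I(Ω))` of a set of points `Ω`. -/
def pClosure (S : RawMul 𝔽 n) (Ω : Set (Fin n → 𝔽)) : Set (Fin n → 𝔽) :=
  {a | ∀ F ∈ zeroIdeal S Ω, eval S a F = 0}

/-- `Ω` is P-closed if it equals its P-closure. -/
def IsPClosed (S : RawMul 𝔽 n) (Ω : Set (Fin n → 𝔽)) : Prop := pClosure S Ω = Ω

/-- `B` is P-independent: no point of `B` lies in the P-closure of the rest. -/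
def PIndep (S : RawMul 𝔽 n) (B : Set (Fin n → 𝔽)) : Prop :=
  ∀ a ∈ B, a ∉ pClosure S (B \ {a})

/-- `B` is a P-basis of `Ω`: a P-independent subset of `Ω` whose P-closure is `Ω`. -/
def IsPBasis (S : RawMul 𝔽 n) (B Ω : Set (Fin n → 𝔽)) : Prop :=
  B ⊆ Ω ∧ PIndep S B ∧ pClosure S B = Ω

/-- `Ω` is finitely generated: it is the P-closure of a finite subset of itself. -/
def FinGen (S : RawMul 𝔽 n) (Ω : Set (Fin n → 𝔽)) : Prop :=
  ∃ G : Set (Fin n → 𝔽), G.Finite ∧ G ⊆ Ω ∧ pClosure S G = Ω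

/-- The rank of a P-closed set: the (common) cardinality of its P-bases. -/
noncomputable def pRank (S : RawMul 𝔽 n) (Ω : Set (Fin n → 𝔽)) : ℕ :=
  sInf {k : ℕ | ∃ B : Finset (Fin n → 𝔽), IsPBasis S ↑B Ω ∧ B.card = k}

/-- The image of the evaluation map `E_Ω : R → 𝔽^Ω`, as a left `𝔽`-subspace of `𝔽^Ω`
(the span of the image; the image is itself a subspace since evaluation is left linear). -/
noncomputable def evalSpan (S : RawMul 𝔽 n) (Ω : Set (Fin n → 𝔽)) :
    Submodule 𝔽 (↥Ω → 𝔽) :=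
  Submodule.span 𝔽 (Set.range fun F : SkewPoly 𝔽 n => fun a : ↥Ω => eval S ↑a F)

/-- `I` is a two-sided ideal with respect to the multiplication `S`. -/
def IsTwoSidedIdealSet (S : RawMul 𝔽 n) (I : Set (SkewPoly 𝔽 n)) : Prop :=
  (0 : SkewPoly 𝔽 n) ∈ I ∧ (∀ F ∈ I, ∀ G ∈ I, F + G ∈ I) ∧ (∀ F ∈ I, -F ∈ I) ∧
    (∀ F ∈ I, ∀ G : SkewPoly 𝔽 n, S.mul G F ∈ I) ∧
    (∀ F ∈ I, ∀ G : SkewPoly 𝔽 n, S.mul F G ∈ I)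


/-- The left row-rank of the skew Vandermonde matrix `V_d(G)`: the dimension of the
left `𝔽`-span of its rows `(N_m(c))_{c ∈ G}`, indexed by the words `m` of length `< d`,
where `N_m(c)` is the evaluation of the monomial `m` at the point `c`. -/
noncomputable def vandermondeRank (S : RawMul 𝔽 n) (G : Finset (Fin n → 𝔽)) (d : ℕ) :
    Cardinal :=
  Module.rank 𝔽 ↥(Submodule.span 𝔽 (Set.range
    fun m : {m : FreeMonoid (Fin n) // FreeMonoid.length m < d} =>
      fun c : ↥G => eval S ↑c (Finsupp.single (m : FreeMonoid (Fin n)) (1 : 𝔽))))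

end SkewPoly

open SkewPoly

section Aux

variable {𝔽 : Type*} [DivisionRing 𝔽] {n : ℕ} (S : RawMul 𝔽 n)

lemma mul_zero' (F : SkewPoly 𝔽 n) : S.mul F 0 = 0 := by
  have h := S.mul_add F 0 0
  simpa using h.symm

lemma zero_mul' (F : SkewPoly 𝔽 n) : S.mul 0 F = 0 := by
  have h := S.add_mul 0 0 F
  simpa using h.symm

lemma mul_neg' (F G : SkewPoly 𝔽 n) : S.mul F (-G) = -(S.mul F G) := by
  have h := S.mul_add F G (-G)
  simp only [add_neg_cancel, mul_zero' S] at h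
  linear_combination (norm := abel) -h

lemma neg_mul' (F G : SkewPoly 𝔽 n) : S.mul (-F) G = -(S.mul F G) := by
  have h := S.add_mul F (-F) G
  simp only [add_neg_cancel, zero_mul' S] at h
  linear_combination (norm := abel) -h

lemma mul_sub' (F G H : SkewPoly 𝔽 n) : S.mul F (G - H) = S.mul F G - S.mul F H := by
  rw [sub_eq_add_neg, S.mul_add, mul_neg', sub_eq_add_neg]

lemma sub_mul' (F G H : SkewPoly 𝔽 n) : S.mul (F - G) H = S.mul F H - S.mul G H := by
  rw [sub_eq_add_neg, S.add_mul, neg_mul', sub_eq_add_neg]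

lemma smul_eq_C_mul (a : 𝔽) (F : SkewPoly 𝔽 n) : a • F = S.mul (C n a) F :=
  (S.const_mul a F).symm

lemma smul_mul_left (a : 𝔽) (F G : SkewPoly 𝔽 n) :
    S.mul (a • F) G = a • S.mul F G := by
  rw [smul_eq_C_mul S, smul_eq_C_mul S, S.mul_assoc]

lemma sum_mul' {α : Type*} (t : Finset α) (f : α → SkewPoly 𝔽 n) (G : SkewPoly 𝔽 n) :
    S.mul (∑ x ∈ t, f x) G = ∑ x ∈ t, S.mul (f x) G := by
  classical
  induction t using Finset.induction_on with
  | empty => simp [zero_mul' S]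
  | @insert _ _ h ih => rw [Finset.sum_insert h, Finset.sum_insert h, S.add_mul, ih]

lemma mul_sum' {α : Type*} (t : Finset α) (F : SkewPoly 𝔽 n) (g : α → SkewPoly 𝔽 n) :
    S.mul F (∑ x ∈ t, g x) = ∑ x ∈ t, S.mul F (g x) := by
  classical
  induction t using Finset.induction_on with
  | empty => simp [mul_zero' S]
  | @insert _ _ h ih => rw [Finset.sum_insert h, Finset.sum_insert h, S.mul_add, ih]

lemma single_eq_smul (m : FreeMonoid (Fin n)) (c : 𝔽) :
    Finsupp.single m c = c • Finsupp.single m (1 : 𝔽) := by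
  rw [Finsupp.smul_single, smul_eq_mul, mul_one]

lemma mono_mul (m m' : FreeMonoid (Fin n)) (c : 𝔽) :
    S.mul (Finsupp.single m c) (Finsupp.single m' 1) = Finsupp.single (m * m') c := by
  rw [single_eq_smul m c, smul_mul_left S, S.mono_mul_mono, ← single_eq_smul]

/-- Right multiplication by a variable is a shift of the words. -/
lemma mul_X (G : SkewPoly 𝔽 n) (i : Fin n) :
    S.mul G (X 𝔽 i) = Finsupp.mapDomain (· * FreeMonoid.of i) G := by
  classical
  conv_lhs => rw [← Finsupp.sum_single G]
  rw [Finsupp.sum, sum_mul' S, Finsupp.mapDomain]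
  rw [Finsupp.sum]
  refine Finset.sum_congr rfl fun m _ => ?_
  exact mono_mul S m (FreeMonoid.of i) (G m)

lemma append_inj (i : Fin n) :
    Function.Injective (fun m : FreeMonoid (Fin n) => m * FreeMonoid.of i) := by
  intro a b h
  have h2 : (a * FreeMonoid.of i).toList = (b * FreeMonoid.of i).toList := by
    dsimp only at h; rw [h]
  simp only [FreeMonoid.toList_mul, FreeMonoid.toList_of] at h2
  exact FreeMonoid.toList.injective (List.append_cancel_right h2)

lemma mul_X_apply (G : SkewPoly 𝔽 n) (i : Fin n) (m : FreeMonoid (Fin n)) :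
    (S.mul G (X 𝔽 i)) (m * FreeMonoid.of i) = G m := by
  rw [mul_X S]
  exact Finsupp.mapDomain_apply (append_inj i) G m

lemma mul_X_apply_ne (G : SkewPoly 𝔽 n) (i : Fin n) (w : FreeMonoid (Fin n))
    (hw : ∀ m, w ≠ m * FreeMonoid.of i) : (S.mul G (X 𝔽 i)) w = 0 := by
  rw [mul_X S]
  apply Finsupp.mapDomain_notin_range
  rintro ⟨m, rfl⟩
  exact hw m rfl

lemma deg_le_iff {F : SkewPoly 𝔽 n} {d : ℕ} :
    deg F ≤ (d : WithBot ℕ) ↔ ∀ m ∈ F.support, FreeMonoid.length m ≤ d := by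
  simp only [deg, Finset.sup_le_iff, Nat.cast_le]

lemma coeff_eq_zero_of_deg_lt {F : SkewPoly 𝔽 n} {d : ℕ} (h : deg F ≤ (d : WithBot ℕ))
    {w : FreeMonoid (Fin n)} (hw : d < FreeMonoid.length w) : F w = 0 := by
  by_contra hne
  exact absurd ((deg_le_iff.1 h) w (Finsupp.mem_support_iff.2 hne)) (by omega)

lemma deg_zero : deg (0 : SkewPoly 𝔽 n) = ⊥ := by simp [deg]

lemma deg_single_le (m : FreeMonoid (Fin n)) (c : 𝔽) :
    deg (Finsupp.single m c) ≤ (FreeMonoid.length m : WithBot ℕ) := by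
  rw [deg_le_iff]
  intro m' hm'
  have := Finsupp.support_single_subset hm'
  rw [Finset.mem_singleton] at this
  exact le_of_eq (by rw [this])

lemma deg_C_le (c : 𝔽) : deg (C n c) ≤ ((0 : ℕ) : WithBot ℕ) := deg_single_le 1 c

lemma deg_add_le (F G : SkewPoly 𝔽 n) : deg (F + G) ≤ max (deg F) (deg G) := by
  classical
  refine le_trans (Finset.sup_mono (Finsupp.support_add)) ?_
  rw [Finset.sup_union]
  exact le_rfl

lemma deg_neg (F : SkewPoly 𝔽 n) : deg (-F) = deg F := by
  simp [deg, Finsupp.support_neg]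

lemma deg_sub_le (F G : SkewPoly 𝔽 n) : deg (F - G) ≤ max (deg F) (deg G) := by
  rw [sub_eq_add_neg]
  simpa [deg_neg] using deg_add_le F (-G)

lemma deg_smul_le (c : 𝔽) (F : SkewPoly 𝔽 n) : deg (c • F) ≤ deg F :=
  Finset.sup_mono (Finsupp.support_smul)

lemma deg_sum_le {α : Type*} (t : Finset α) (f : α → SkewPoly 𝔽 n) (D : WithBot ℕ)
    (h : ∀ x ∈ t, deg (f x) ≤ D) : deg (∑ x ∈ t, f x) ≤ D := by
  classical
  induction t using Finset.induction_on with
  | empty => simp [deg_zero]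
  | @insert a s ha ih =>
    rw [Finset.sum_insert ha]
    refine le_trans (deg_add_le _ _) (max_le (h a (by simp)) (ih fun x hx => h x (by simp [hx])))

lemma deg_mul_le (F G : SkewPoly 𝔽 n) : deg (S.mul F G) ≤ deg F + deg G := by
  by_cases hF : F = 0
  · simp [hF, zero_mul' S, deg_zero]
  by_cases hG : G = 0
  · simp [hG, mul_zero' S, deg_zero]
  exact le_of_eq (S.deg_mul F G hF hG)

lemma C_zero : C n (0 : 𝔽) = 0 := Finsupp.single_zero 1

lemma deg_mul_C_le (G : SkewPoly 𝔽 n) (c : 𝔽) : deg (S.mul G (C n c)) ≤ deg G := by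
  by_cases hc : c = 0
  · simp [hc, C_zero, mul_zero' S, deg_zero]
  refine le_trans (deg_mul_le S G (C n c)) ?_
  have h0 : deg (C n c) ≤ ((0:ℕ) : WithBot ℕ) := deg_C_le c
  calc deg G + deg (C n c) ≤ deg G + ((0:ℕ) : WithBot ℕ) := by
        exact add_le_add le_rfl h0
    _ = deg G := by
        norm_num

lemma C_add (x y : 𝔽) : C n (x + y) = C n x + C n y := Finsupp.single_add 1 x y

lemma C_smul (c x : 𝔽) : c • C n x = C n (c * x) := by
  rw [C, C, Finsupp.smul_single, smul_eq_mul]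

lemma C_sum {α : Type*} (t : Finset α) (f : α → 𝔽) :
    C n (∑ x ∈ t, f x) = ∑ x ∈ t, C n (f x) :=
  map_sum (Finsupp.singleAddHom (1 : FreeMonoid (Fin n))) f t

lemma dec_zero (a : Fin n → 𝔽) : Decomposes S a 0 0 :=
  ⟨0, by simp [zero_mul' S, C_zero]⟩

lemma dec_C (a : Fin n → 𝔽) (c : 𝔽) : Decomposes S a (C n c) c :=
  ⟨0, by simp [zero_mul' S]⟩

lemma dec_add {a : Fin n → 𝔽} {F F' : SkewPoly 𝔽 n} {b b' : 𝔽}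
    (h : Decomposes S a F b) (h' : Decomposes S a F' b') :
    Decomposes S a (F + F') (b + b') := by
  obtain ⟨G, hG⟩ := h
  obtain ⟨G', hG'⟩ := h'
  refine ⟨fun i => G i + G' i, ?_⟩
  simp only [S.add_mul, hG, hG', C_add, Finset.sum_add_distrib]
  abel

lemma dec_smul {a : Fin n → 𝔽} {F : SkewPoly 𝔽 n} {b : 𝔽} (c : 𝔽)
    (h : Decomposes S a F b) : Decomposes S a (c • F) (c * b) := by
  obtain ⟨G, hG⟩ := h
  refine ⟨fun i => c • G i, ?_⟩
  simp only [smul_mul_left S, hG, smul_add, Finset.smul_sum, C_smul]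

lemma dec_X_mul {σ : 𝔽 → Matrix (Fin n) (Fin n) 𝔽} {δ : 𝔽 → Fin n → 𝔽}
    (hS : HasCommRule S σ δ) (a : Fin n → 𝔽) {F : SkewPoly 𝔽 n} {b : 𝔽}
    (h : Decomposes S a F b) (i : Fin n) :
    Decomposes S a (S.mul (X 𝔽 i) F) ((σ b *ᵥ a) i + δ b i) := by
  obtain ⟨G, hG⟩ := h
  refine ⟨fun j => S.mul (X 𝔽 i) (G j) + C n (σ b i j), ?_⟩
  have key : ∀ j, Finsupp.single (FreeMonoid.of j) (σ b i j)
      = S.mul (C n (σ b i j)) (X 𝔽 j - C n (a j)) + C n (σ b i j * (a j)) := by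
    intro j
    rw [mul_sub' S, S.const_mul, S.const_mul, ← C_smul]
    have hX : (σ b i j) • X 𝔽 j = Finsupp.single (FreeMonoid.of j) (σ b i j) := by
      rw [X, Finsupp.smul_single, smul_eq_mul, mul_one]
    rw [hX]
    abel
  calc S.mul (X 𝔽 i) F
      = (∑ j, S.mul (X 𝔽 i) (S.mul (G j) (X 𝔽 j - C n (a j)))) + S.mul (X 𝔽 i) (C n b) := by
        rw [hG, S.mul_add, mul_sum' S]
    _ = (∑ j, S.mul (S.mul (X 𝔽 i) (G j)) (X 𝔽 j - C n (a j)))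
        + ((∑ j, (S.mul (C n (σ b i j)) (X 𝔽 j - C n (a j)) + C n (σ b i j * (a j))))
          + C n (δ b i)) := by
        rw [hS i b]
        simp only [← S.mul_assoc, key]
    _ = (∑ j, S.mul (S.mul (X 𝔽 i) (G j) + C n (σ b i j)) (X 𝔽 j - C n (a j)))
        + C n ((σ b *ᵥ a) i + δ b i) := by
        simp only [S.add_mul, Finset.sum_add_distrib, C_add, Matrix.mulVec, dotProduct,
          C_sum]
        abel

lemma exists_dec_single_one {σ : 𝔽 → Matrix (Fin n) (Fin n) 𝔽} {δ : 𝔽 → Fin n → 𝔽}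
    (hS : HasCommRule S σ δ) (a : Fin n → 𝔽) (m : FreeMonoid (Fin n)) :
    ∃ b, Decomposes S a (Finsupp.single m (1 : 𝔽)) b := by
  induction m using FreeMonoid.recOn with
  | one => exact ⟨1, dec_C S a 1⟩
  | of_mul i m ih =>
    obtain ⟨b, hb⟩ := ih
    refine ⟨(σ b *ᵥ a) i + δ b i, ?_⟩
    have : Finsupp.single (FreeMonoid.of i * m) (1 : 𝔽)
        = S.mul (X 𝔽 i) (Finsupp.single m 1) := (S.mono_mul_mono _ _).symm
    rw [this]
    exact dec_X_mul S hS a hb i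

lemma exists_dec {σ : 𝔽 → Matrix (Fin n) (Fin n) 𝔽} {δ : 𝔽 → Fin n → 𝔽}
    (hS : HasCommRule S σ δ) (a : Fin n → 𝔽) (F : SkewPoly 𝔽 n) :
    ∃ b, Decomposes S a F b := by
  induction F using Finsupp.induction with
  | zero => exact ⟨0, dec_zero S a⟩
  | single_add m c F _ _ ih =>
    obtain ⟨b, hb⟩ := ih
    obtain ⟨b', hb'⟩ := exists_dec_single_one S hS a m
    refine ⟨c * b' + b, ?_⟩
    have : Finsupp.single m c = c • Finsupp.single m (1 : 𝔽) := single_eq_smul m c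
    rw [this]
    exact dec_add S (dec_smul S c hb') hb

lemma last_letter {m m' : FreeMonoid (Fin n)} {i i' : Fin n}
    (h : m * FreeMonoid.of i = m' * FreeMonoid.of i') : i = i' ∧ m = m' := by
  have h2 : (m.toList ++ [i]).reverse = (m'.toList ++ [i']).reverse := by
    have := congrArg FreeMonoid.toList h
    simp only [FreeMonoid.toList_mul, FreeMonoid.toList_of] at this
    rw [this]
  simp only [List.reverse_append, List.reverse_cons, List.reverse_nil, List.nil_append,
    List.singleton_append, List.cons.injEq] at h2
  refine ⟨h2.1, ?_⟩
  have := congrArg List.reverse h2.2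
  simpa using this

/-- Key uniqueness lemma: a sum `∑ Hᵢ (xᵢ - aᵢ)` that is a constant must be zero. -/
lemma sum_mul_eq_C {H : Fin n → SkewPoly 𝔽 n} {a : Fin n → 𝔽} {c : 𝔽}
    (h : (∑ i, S.mul (H i) (X 𝔽 i - C n (a i))) = C n c) : c = 0 := by
  classical
  by_cases hH : ∀ i, H i = 0
  · have : C n c = 0 := by
      rw [← h]
      simp [hH, zero_mul' S]
    exact (Finsupp.single_eq_zero).1 this
  push_neg at hH
  obtain ⟨i₀, hi₀⟩ := hH
  exfalso
  -- pick the pair (i*, m*) with m* ∈ supp(H i*) of maximal length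
  set T : Finset ((_ : Fin n) × FreeMonoid (Fin n)) :=
    Finset.univ.sigma (fun i => (H i).support) with hT
  have hTne : T.Nonempty := by
    obtain ⟨m, hm⟩ := Finsupp.support_nonempty_iff.2 hi₀
    exact ⟨⟨i₀, m⟩, by simp [hT, hm]⟩
  obtain ⟨⟨istar, mstar⟩, hmem, hmax⟩ :=
    Finset.exists_max_image T (fun p => FreeMonoid.length p.2) hTne
  rw [hT, Finset.mem_sigma] at hmem
  have hmaxlen : ∀ i, ∀ m ∈ (H i).support, FreeMonoid.length m ≤ FreeMonoid.length mstar := by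
    intro i m hm
    exact hmax ⟨i, m⟩ (by simp [hT, hm])
  set w : FreeMonoid (Fin n) := mstar * FreeMonoid.of istar with hw
  have hwlen : FreeMonoid.length w = FreeMonoid.length mstar + 1 := by
    rw [hw, FreeMonoid.length_mul, FreeMonoid.length_of]
  -- evaluate coefficients at w
  have hcoeff : (∑ i, S.mul (H i) (X 𝔽 i - C n (a i))) w = H istar mstar := by
    rw [Finset.sum_apply']
    have hterm : ∀ i, (S.mul (H i) (X 𝔽 i - C n (a i))) w
        = (S.mul (H i) (X 𝔽 i)) w := by
      intro i
      rw [mul_sub' S]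
      have hz : (S.mul (H i) (C n (a i))) w = 0 := by
        refine coeff_eq_zero_of_deg_lt (d := FreeMonoid.length mstar) ?_ ?_
        · refine le_trans (deg_mul_C_le S _ _) ?_
          rw [deg_le_iff]
          exact fun m hm => hmaxlen i m hm
        · omega
      rw [Finsupp.sub_apply, hz, sub_zero]
    rw [Finset.sum_congr rfl (fun i _ => hterm i)]
    have hterm2 : ∀ i, (S.mul (H i) (X 𝔽 i)) w
        = if i = istar then H istar mstar else 0 := by
      intro i
      by_cases hi : i = istar
      · subst hi
        rw [if_pos rfl, hw, mul_X_apply S]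
      · rw [if_neg hi]
        refine mul_X_apply_ne S _ _ _ ?_
        intro m hm
        rw [hw] at hm
        exact hi ((last_letter hm).1.symm)
    rw [Finset.sum_congr rfl (fun i _ => hterm2 i)]
    simp
  have hC : (C n c) w = 0 := by
    refine Finsupp.single_eq_of_ne ?_
    intro h1
    have := congrArg FreeMonoid.length h1
    simp only [hwlen] at this
    have h0 : FreeMonoid.length (1 : FreeMonoid (Fin n)) = 0 := rfl
    omega
  rw [h, hC] at hcoeff
  exact (Finsupp.mem_support_iff.1 hmem.2) hcoeff.symm

lemma dec_unique {a : Fin n → 𝔽} {F : SkewPoly 𝔽 n} {b b' : 𝔽}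
    (h : Decomposes S a F b) (h' : Decomposes S a F b') : b = b' := by
  obtain ⟨G, hG⟩ := h
  obtain ⟨G', hG'⟩ := h'
  have key : (∑ i, S.mul (G i - G' i) (X 𝔽 i - C n (a i))) = C n (b' - b) := by
    simp only [sub_mul' S]
    rw [Finset.sum_sub_distrib]
    have h1 : (∑ i, S.mul (G i) (X 𝔽 i - C n (a i))) = F - C n b := by
      rw [hG]; abel
    have h2 : (∑ i, S.mul (G' i) (X 𝔽 i - C n (a i))) = F - C n b' := by
      rw [hG']; abel
    rw [h1, h2]
    have e1 : (F - C n b) - (F - C n b') = C n b' - C n b := by abel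
    rw [e1, C, C, ← Finsupp.single_sub]
    rfl
  have h0 := sum_mul_eq_C S key
  exact (sub_eq_zero.1 h0).symm

lemma eval_eq {a : Fin n → 𝔽} {F : SkewPoly 𝔽 n} {b : 𝔽}
    (h : Decomposes S a F b) : eval S a F = b := by
  have hex : ∃ c, Decomposes S a F c := ⟨b, h⟩
  unfold eval
  rw [dif_pos hex]
  exact dec_unique S hex.choose_spec h

variable {σ : 𝔽 → Matrix (Fin n) (Fin n) 𝔽} {δ : 𝔽 → Fin n → 𝔽}

lemma eval_C (a : Fin n → 𝔽) (c : 𝔽) : eval S a (C n c) = c :=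
  eval_eq S (dec_C S a c)

lemma eval_zero (a : Fin n → 𝔽) : eval S a (0 : SkewPoly 𝔽 n) = 0 :=
  eval_eq S (dec_zero S a)

lemma eval_add (hS : HasCommRule S σ δ) (a : Fin n → 𝔽) (F G : SkewPoly 𝔽 n) :
    eval S a (F + G) = eval S a F + eval S a G := by
  obtain ⟨bF, hF⟩ := exists_dec S hS a F
  obtain ⟨bG, hG⟩ := exists_dec S hS a G
  rw [eval_eq S hF, eval_eq S hG, eval_eq S (dec_add S hF hG)]

lemma eval_smul (hS : HasCommRule S σ δ) (a : Fin n → 𝔽) (c : 𝔽) (F : SkewPoly 𝔽 n) :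
    eval S a (c • F) = c * eval S a F := by
  obtain ⟨bF, hF⟩ := exists_dec S hS a F
  rw [eval_eq S hF, eval_eq S (dec_smul S c hF)]

lemma eval_sub (hS : HasCommRule S σ δ) (a : Fin n → 𝔽) (F G : SkewPoly 𝔽 n) :
    eval S a (F - G) = eval S a F - eval S a G := by
  have hneg : -G = (-1 : 𝔽) • G := by rw [neg_one_smul]
  rw [sub_eq_add_neg, hneg, eval_add S hS, eval_smul S hS, neg_one_mul, ← sub_eq_add_neg]

lemma eval_sum (hS : HasCommRule S σ δ) (a : Fin n → 𝔽) {α : Type*} (t : Finset α)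
    (f : α → SkewPoly 𝔽 n) :
    eval S a (∑ x ∈ t, f x) = ∑ x ∈ t, eval S a (f x) := by
  classical
  induction t using Finset.induction_on with
  | empty => simp [eval_zero S]
  | @insert x s hx ih =>
    rw [Finset.sum_insert hx, Finset.sum_insert hx, eval_add S hS, ih]

lemma eval_mul_eq_zero (hS : HasCommRule S σ δ) (x : Fin n → 𝔽) (Q G : SkewPoly 𝔽 n)
    (hG : eval S x G = 0) : eval S x (S.mul Q G) = 0 := by
  obtain ⟨bG, hdec⟩ := exists_dec S hS x G
  have hb0 : bG = 0 := by rw [← eval_eq S hdec, hG]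
  subst hb0
  obtain ⟨W, hW⟩ := hdec
  rw [C_zero, add_zero] at hW
  refine eval_eq S ⟨fun i => S.mul Q (W i), ?_⟩
  rw [hW, mul_sum' S]
  rw [C_zero, add_zero]
  exact Finset.sum_congr rfl fun i _ => (S.mul_assoc _ _ _).symm

lemma deg_lt_iff {F : SkewPoly 𝔽 n} {q : ℕ} :
    deg F < (q : WithBot ℕ) ↔ ∀ m ∈ F.support, FreeMonoid.length m < q := by
  rw [deg]
  rw [Finset.sup_lt_iff (show (⊥ : WithBot ℕ) < (q : WithBot ℕ) from by
    exact_mod_cast WithBot.bot_lt_coe q)]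
  simp only [Nat.cast_lt]

lemma coeff_zero_of_deg_lt {F : SkewPoly 𝔽 n} {q : ℕ} (h : deg F < (q : WithBot ℕ))
    {w : FreeMonoid (Fin n)} (hw : q ≤ FreeMonoid.length w) : F w = 0 := by
  by_contra hne
  exact absurd (deg_lt_iff.1 h w (Finsupp.mem_support_iff.2 hne)) (by omega)

lemma deg_nonneg_of_ne_zero {F : SkewPoly 𝔽 n} (h : F ≠ 0) :
    ((0 : ℕ) : WithBot ℕ) ≤ deg F := by
  obtain ⟨m, hm⟩ := Finsupp.support_nonempty_iff.2 h
  have h0 : ((0 : ℕ) : WithBot ℕ) ≤ ((FreeMonoid.length m : ℕ) : WithBot ℕ) := by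
    exact_mod_cast Nat.zero_le (FreeMonoid.length m)
  exact le_trans h0 (Finset.le_sup (f := fun m => ((FreeMonoid.length m : ℕ) : WithBot ℕ)) hm)

lemma deg_mul_lt (A F : SkewPoly 𝔽 n) (p q : ℕ) (hA : deg A ≤ (p : WithBot ℕ))
    (hF : deg F < (q : WithBot ℕ)) : deg (S.mul A F) < ((p + q : ℕ) : WithBot ℕ) := by
  by_cases hA0 : A = 0
  · rw [hA0, zero_mul' S, deg_zero]; exact WithBot.bot_lt_coe _
  by_cases hF0 : F = 0
  · rw [hF0, mul_zero' S, deg_zero]; exact WithBot.bot_lt_coe _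
  rw [S.deg_mul A F hA0 hF0]
  have hA' : deg A ≠ ⊥ := fun hbot => by
    have := deg_nonneg_of_ne_zero hA0
    rw [hbot] at this
    exact absurd this (by simp)
  have hF' : deg F ≠ ⊥ := fun hbot => by
    have := deg_nonneg_of_ne_zero hF0
    rw [hbot] at this
    exact absurd this (by simp)
  obtain ⟨pa, hpa⟩ := WithBot.ne_bot_iff_exists.1 hA'
  obtain ⟨qf, hqf⟩ := WithBot.ne_bot_iff_exists.1 hF'
  rw [← hpa, ← hqf]
  rw [← hpa] at hA
  rw [← hqf] at hF
  simp only [Nat.cast_withBot] at hA hF ⊢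
  rw [← WithBot.coe_add]
  have h1 : pa ≤ p := WithBot.coe_le_coe.1 hA
  have h2 : qf < q := WithBot.coe_lt_coe.1 hF
  exact WithBot.coe_lt_coe.2 (by omega)

/-- Given interpolation on `B` below degree `|B|`, for any word `m` of length `≥ |B|` and
coefficient `c`, there are `G`, `Q` with `G` vanishing on `B` of degree `≤ |B|`, `Q` a
left multiple of `G` of degree `≤ |m|`, whose coefficients on words of length `≥ |m|`
agree with `single m c`. -/
lemma annihilator (hS : HasCommRule S σ δ) (B : Finset (Fin n → 𝔽))
    (hinterp : ∀ v : (Fin n → 𝔽) → 𝔽, ∃ I : SkewPoly 𝔽 n,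
      (∀ x ∈ B, eval S x I = v x) ∧ deg I < (B.card : WithBot ℕ))
    (m : FreeMonoid (Fin n)) (hm : B.card ≤ FreeMonoid.length m) (c : 𝔽) :
    ∃ G Q : SkewPoly 𝔽 n, (∀ x ∈ B, eval S x G = 0) ∧ deg G ≤ (B.card : WithBot ℕ) ∧
      (∀ b, eval S b G = 0 → eval S b Q = 0) ∧ (∀ x ∈ B, eval S x Q = 0) ∧
      deg Q ≤ (FreeMonoid.length m : WithBot ℕ) ∧
      (∀ w, FreeMonoid.length m ≤ FreeMonoid.length w → Q w = Finsupp.single m c w) := by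
  classical
  set s := B.card with hs
  set l := FreeMonoid.length m with hl
  set m₁ : FreeMonoid (Fin n) := FreeMonoid.ofList (m.toList.take (l - s)) with hm₁
  set m₂ : FreeMonoid (Fin n) := FreeMonoid.ofList (m.toList.drop (l - s)) with hm₂
  have hsplit : m₁ * m₂ = m := by
    have : m₁ * m₂ = FreeMonoid.ofList (m.toList.take (l - s) ++ m.toList.drop (l - s)) := rfl
    rw [this, List.take_append_drop]
    rfl
  have hlen₁ : FreeMonoid.length m₁ = l - s := by
    have : FreeMonoid.length m₁ = (m.toList.take (l - s)).length := rfl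
    rw [this, List.length_take]
    have : m.toList.length = l := rfl
    omega
  have hlen₂ : FreeMonoid.length m₂ = s := by
    have h1 : FreeMonoid.length m₂ = (m.toList.drop (l - s)).length := rfl
    rw [h1, List.length_drop]
    have : m.toList.length = l := rfl
    omega
  obtain ⟨I, hI1, hI2⟩ := hinterp (fun x => eval S x (Finsupp.single m₂ (1 : 𝔽)))
  refine ⟨Finsupp.single m₂ 1 - I, S.mul (Finsupp.single m₁ c) (Finsupp.single m₂ 1 - I),
    ?_, ?_, ?_, ?_, ?_, ?_⟩
  · intro x hx
    rw [eval_sub S hS, hI1 x hx, sub_self]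
  · refine le_trans (deg_sub_le _ _) (max_le ?_ ?_)
    · rw [← hlen₂]
      exact deg_single_le m₂ 1
    · exact le_of_lt hI2
  · intro b hb
    exact eval_mul_eq_zero S hS b _ _ hb
  · intro x hx
    refine eval_mul_eq_zero S hS x _ _ ?_
    rw [eval_sub S hS, hI1 x hx, sub_self]
  · rw [mul_sub' S, mono_mul S, hsplit]
    refine le_trans (deg_sub_le _ _) (max_le (deg_single_le m c) ?_)
    have := deg_mul_lt S (Finsupp.single m₁ c) I (l - s) s
      (by rw [← hlen₁]; exact deg_single_le m₁ c) hI2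
    refine le_trans (le_of_lt this) ?_
    exact_mod_cast (by omega : l - s + s ≤ l)
  · intro w hw
    rw [mul_sub' S, mono_mul S, hsplit, Finsupp.sub_apply]
    have hz : (S.mul (Finsupp.single m₁ c) I) w = 0 := by
      have hd := deg_mul_lt S (Finsupp.single m₁ c) I (l - s) s
          (by rw [← hlen₁]; exact deg_single_le m₁ c) hI2
      exact coeff_zero_of_deg_lt hd (by omega)
    rw [hz, sub_zero]

/-- Degree reduction: given interpolation on `B` below degree `|B|`, any witness `P`
vanishing on `B` with `P(b) ≠ 0` can be replaced by one of degree `≤ |B|`. -/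
lemma reduce (hS : HasCommRule S σ δ) (B : Finset (Fin n → 𝔽))
    (hinterp : ∀ v : (Fin n → 𝔽) → 𝔽, ∃ I : SkewPoly 𝔽 n,
      (∀ x ∈ B, eval S x I = v x) ∧ deg I < (B.card : WithBot ℕ)) :
    ∀ d : ℕ, ∀ P : SkewPoly 𝔽 n, deg P ≤ (d : WithBot ℕ) →
      (∀ x ∈ B, eval S x P = 0) → ∀ b, eval S b P ≠ 0 →
      ∃ F : SkewPoly 𝔽 n, (∀ x ∈ B, eval S x F = 0) ∧ eval S b F ≠ 0 ∧
        deg F ≤ (B.card : WithBot ℕ) := by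
  intro d
  induction d using Nat.strong_induction_on with
  | _ d ih =>
  intro P hdeg hvan b hb
  by_cases hd : d ≤ B.card
  · exact ⟨P, hvan, hb, le_trans hdeg (by exact_mod_cast hd)⟩
  push_neg at hd
  classical
  set T := P.support.filter (fun w => FreeMonoid.length w = d) with hT
  have hTlen : ∀ m ∈ T, FreeMonoid.length m = d := by
    intro m hm
    exact (Finset.mem_filter.1 hm).2
  have hTsupp : ∀ m ∈ T, m ∈ P.support := by
    intro m hm
    exact (Finset.mem_filter.1 hm).1
  have hGQ : ∀ m ∈ T, ∃ G Q : SkewPoly 𝔽 n,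
      (∀ x ∈ B, eval S x G = 0) ∧ deg G ≤ (B.card : WithBot ℕ) ∧
      (∀ b', eval S b' G = 0 → eval S b' Q = 0) ∧ (∀ x ∈ B, eval S x Q = 0) ∧
      deg Q ≤ (FreeMonoid.length m : WithBot ℕ) ∧
      (∀ w, FreeMonoid.length m ≤ FreeMonoid.length w → Q w = Finsupp.single m (P m) w) := by
    intro m hm
    exact annihilator S hS B hinterp m (by rw [hTlen m hm]; omega) (P m)
  choose G Q hG1 hG2 hG3 hG4 hG5 hG6 using hGQ
  by_cases hcase : ∃ m, ∃ hm : m ∈ T, eval S b (G m hm) ≠ 0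
  · obtain ⟨m, hm, hne⟩ := hcase
    exact ⟨G m hm, hG1 m hm, hne, hG2 m hm⟩
  push_neg at hcase
  set P' := P - ∑ m ∈ T.attach, Q m.1 m.2 with hP'
  have hvan' : ∀ x ∈ B, eval S x P' = 0 := by
    intro x hx
    rw [hP', eval_sub S hS, hvan x hx, eval_sum S hS,
      Finset.sum_eq_zero (fun m _ => hG4 m.1 m.2 x hx)]
    simp
  have hb' : eval S b P' ≠ 0 := by
    rw [hP', eval_sub S hS, eval_sum S hS,
      Finset.sum_eq_zero (fun m _ => hG3 m.1 m.2 b (hcase m.1 m.2))]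
    simpa using hb
  have hdeg' : deg P' ≤ ((d - 1 : ℕ) : WithBot ℕ) := by
    rw [deg_le_iff]
    intro w hw
    by_contra hlong
    push_neg at hlong
    have hwd : d ≤ FreeMonoid.length w := by omega
    have hPw' : P' w = 0 := by
      rw [hP', Finsupp.sub_apply, Finset.sum_apply']
      have hterm : ∀ m ∈ T.attach, Q m.1 m.2 w = Finsupp.single m.1 (P m.1) w := by
        intro m _
        exact hG6 m.1 m.2 w (by rw [hTlen m.1 m.2]; omega)
      rw [Finset.sum_congr rfl hterm]
      have hsum : (∑ m ∈ T.attach, (Finsupp.single m.1 (P m.1) : SkewPoly 𝔽 n) w) = P w := by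
        by_cases hwd' : FreeMonoid.length w = d
        · by_cases hws : w ∈ P.support
          · have hwT : w ∈ T := Finset.mem_filter.2 ⟨hws, hwd'⟩
            rw [Finset.sum_eq_single_of_mem (⟨w, hwT⟩ : {x // x ∈ T}) (Finset.mem_attach T _)]
            · rw [Finsupp.single_eq_same]
            · intro m _ hne
              refine Finsupp.single_eq_of_ne' ?_
              intro hc
              exact hne (Subtype.ext hc)
          · rw [Finsupp.notMem_support_iff.1 hws]
            refine Finset.sum_eq_zero fun m _ => ?_
            refine Finsupp.single_eq_of_ne' ?_
            intro hc
            exact hws (hc ▸ hTsupp m.1 m.2)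
        · have hgt : d < FreeMonoid.length w := by omega
          rw [coeff_eq_zero_of_deg_lt hdeg hgt]
          refine Finset.sum_eq_zero fun m _ => ?_
          refine Finsupp.single_eq_of_ne' ?_
          intro hc
          have := hTlen m.1 m.2
          rw [hc] at this
          omega
      rw [hsum, sub_self]
    exact (Finsupp.mem_support_iff.1 hw) hPw'
  exact ih (d - 1) (by omega) P' hdeg' hvan' b hb'

lemma pClosure_mono (Ω Ω' : Set (Fin n → 𝔽)) (h : Ω ⊆ Ω') :
    pClosure S Ω ⊆ pClosure S Ω' := by
  intro a ha F hF
  exact ha F (fun x hx => hF x (h hx))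

lemma pindep_mono {B B' : Set (Fin n → 𝔽)} (h : B' ⊆ B) (hB : PIndep S B) :
    PIndep S B' := by
  intro a ha hc
  exact hB a (h ha) (pClosure_mono S _ _ (Set.diff_subset_diff_left h) hc)

/-- Lagrange interpolation on `B`, given "dual basis" elements. -/
lemma interp (hS : HasCommRule S σ δ) (B : Finset (Fin n → 𝔽))
    (hsub : ∀ x ∈ B, ∃ Fx : SkewPoly 𝔽 n, (∀ y ∈ B, y ≠ x → eval S y Fx = 0) ∧
      eval S x Fx ≠ 0 ∧ deg Fx < (B.card : WithBot ℕ))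
    (v : (Fin n → 𝔽) → 𝔽) :
    ∃ F : SkewPoly 𝔽 n, (∀ x ∈ B, eval S x F = v x) ∧ deg F < (B.card : WithBot ℕ) := by
  classical
  rcases B.eq_empty_or_nonempty with hB | hB
  · subst hB
    refine ⟨0, by simp, ?_⟩
    rw [deg_zero]
    exact_mod_cast WithBot.bot_lt_coe (0 : ℕ)
  choose Fx h1 h2 h3 using hsub
  refine ⟨∑ x ∈ B.attach, (v x.1 * (eval S x.1 (Fx x.1 x.2))⁻¹) • Fx x.1 x.2, ?_, ?_⟩
  · intro y hy
    rw [eval_sum S hS]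
    rw [Finset.sum_eq_single_of_mem (⟨y, hy⟩ : {x // x ∈ B}) (Finset.mem_attach _ _)]
    · rw [eval_smul S hS, mul_assoc, inv_mul_cancel₀ (h2 y hy), mul_one]
    · intro m _ hne
      rw [eval_smul S hS, h1 m.1 m.2 y hy (fun hc => hne (Subtype.ext hc.symm)), mul_zero]
  · have hcard : 1 ≤ B.card := Finset.card_pos.2 hB
    have hbound : ∀ x ∈ B.attach,
        deg ((v x.1 * (eval S x.1 (Fx x.1 x.2))⁻¹) • Fx x.1 x.2)
          ≤ ((B.card - 1 : ℕ) : WithBot ℕ) := by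
      intro x _
      refine le_trans (deg_smul_le _ _) ?_
      rw [deg_le_iff]
      intro m hm
      have := deg_lt_iff.1 (h3 x.1 x.2) m hm
      omega
    refine lt_of_le_of_lt (deg_sum_le _ _ _ hbound) ?_
    exact_mod_cast (by omega : B.card - 1 < B.card)

/-- Main induction: statement 10 for finsets. -/
lemma main (hS : HasCommRule S σ δ) : ∀ s : ℕ, ∀ B : Finset (Fin n → 𝔽), B.card = s →
    PIndep S ↑B → ∀ b, b ∉ pClosure S ↑B →
    ∃ F : SkewPoly 𝔽 n, (∀ x ∈ B, eval S x F = 0) ∧ eval S b F ≠ 0 ∧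
      deg F ≤ (B.card : WithBot ℕ) := by
  classical
  intro s
  induction s using Nat.strong_induction_on with
  | _ s ih =>
  intro B hcard hindep b hb
  have hP : ∃ P : SkewPoly 𝔽 n, (∀ x ∈ B, eval S x P = 0) ∧ eval S b P ≠ 0 := by
    by_contra hc
    push_neg at hc
    apply hb
    intro F hF
    exact hc F (fun x hx => hF x (Finset.mem_coe.2 hx))
  obtain ⟨P, hPvan, hPb⟩ := hP
  have hinterp : ∀ v : (Fin n → 𝔽) → 𝔽, ∃ I : SkewPoly 𝔽 n,
      (∀ x ∈ B, eval S x I = v x) ∧ deg I < (B.card : WithBot ℕ) := by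
    intro v
    refine interp S hS B ?_ v
    intro x hx
    have hcard1 : 1 ≤ B.card := Finset.card_pos.2 ⟨x, hx⟩
    have hlt : (B.erase x).card < s := by
      rw [Finset.card_erase_of_mem hx]; omega
    have hindep' : PIndep S ↑(B.erase x) := by
      refine pindep_mono S ?_ hindep
      rw [Finset.coe_erase]
      exact Set.diff_subset
    have hx' : x ∉ pClosure S ↑(B.erase x) := by
      rw [Finset.coe_erase]
      exact hindep x (Finset.mem_coe.2 hx)
    obtain ⟨Fx, hv, hnz, hdeg⟩ := ih _ hlt (B.erase x) rfl hindep' x hx'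
    refine ⟨Fx, ?_, hnz, ?_⟩
    · intro y hy hne
      exact hv y (Finset.mem_erase.2 ⟨hne, hy⟩)
    · refine lt_of_le_of_lt hdeg ?_
      rw [Finset.card_erase_of_mem hx]
      exact_mod_cast (by omega : B.card - 1 < B.card)
  have hdegP : deg P ≤ ((P.support.sup FreeMonoid.length : ℕ) : WithBot ℕ) := by
    rw [deg_le_iff]
    exact fun m hm => Finset.le_sup hm
  exact reduce S hS B hinterp _ P hdegP hPvan b hPb

end Aux

/-- If `B` is finite and P-independent and `b ∉ B̄`, then there is a
skew polynomial `F` of degree `≤ |B|` vanishing on `B` with `F(b) ≠ 0`. -/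
theorem stmt10 {𝔽 : Type*} [DivisionRing 𝔽] {n : ℕ} (hn : 0 < n)
    (σ : 𝔽 → Matrix (Fin n) (Fin n) 𝔽) (δ : 𝔽 → Fin n → 𝔽)
    (hσ : IsMatrixMorphism σ) (hδ : IsVectorDerivation σ δ)
    (S : RawMul 𝔽 n) (hS : HasCommRule S σ δ)
    (B : Set (Fin n → 𝔽)) (hBfin : B.Finite) (hBind : PIndep S B)
    (b : Fin n → 𝔽) (hb : b ∉ pClosure S B) :
    ∃ F : SkewPoly 𝔽 n, (∀ x ∈ B, eval S x F = 0) ∧ eval S b F ≠ 0 ∧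
      deg F ≤ (B.ncard : WithBot ℕ) := by
  classical
  set Bf := hBfin.toFinset with hBf
  have hcoe : (↑Bf : Set (Fin n → 𝔽)) = B := hBfin.coe_toFinset
  have h1 : PIndep S ↑Bf := by rw [hcoe]; exact hBind
  have h2 : b ∉ pClosure S ↑Bf := by rw [hcoe]; exact hb
  obtain ⟨F, hvan, hnz, hdeg⟩ := main S hS Bf.card Bf rfl h1 b h2
  refine ⟨F, ?_, hnz, ?_⟩
  · intro x hx
    refine hvan x ?_
    rw [← hcoe] at hx
    exact_mod_cast hx
  · have hn : B.ncard = Bf.card := by rw [← hcoe, Set.ncard_coe_finset]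
    rw [hn]
    exact hdeg
end

section
/- Every finite P-basis B = {b₁,…,b_M} of a P-closed set Ω ⊆ 𝔽ⁿ admits a dual P-basis consisting of M skew polynomials of degree less than M. Moreover, any two dual P-bases {F₁,…,F_M} and {F₁',…,F_M'} of the same P-basis B define the same skew polynomial functions on Ω: Fᵢ(a) = Fᵢ'(a) for all a ∈ Ω and all i. -/
/- Common setup: free multivariate skew polynomial rings over a division ring. -/

open Matrix Finsupp

open SkewPoly

namespace SkewPoly

variable {𝔽 : Type*} [DivisionRing 𝔽] {n : ℕ}

/-! ### Degree lemmas -/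

theorem le_deg {F : SkewPoly 𝔽 n} {m} (h : m ∈ F.support) :
    ((FreeMonoid.length m : ℕ) : WithBot ℕ) ≤ deg F :=
  Finset.le_sup (f := fun m => ((FreeMonoid.length m : ℕ) : WithBot ℕ)) h

theorem deg_le {F : SkewPoly 𝔽 n} {d : ℕ} (h : ∀ m ∈ F.support, FreeMonoid.length m ≤ d) :
    deg F ≤ (d : WithBot ℕ) := by
  rw [deg]; exact Finset.sup_le fun m hm => by exact_mod_cast h m hm

theorem deg_lt {F : SkewPoly 𝔽 n} {d : ℕ} (h : ∀ m ∈ F.support, FreeMonoid.length m < d) :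
    deg F < (d : WithBot ℕ) := by
  rw [deg]; apply Finset.sup_lt_iff (by exact_mod_cast WithBot.bot_lt_coe d) |>.mpr
  intro m hm
  exact_mod_cast h m hm

theorem lt_of_deg_lt {F : SkewPoly 𝔽 n} {d : ℕ} (h : deg F < (d : WithBot ℕ)) :
    ∀ m ∈ F.support, FreeMonoid.length m < d := fun m hm => by
  exact_mod_cast lt_of_le_of_lt (le_deg hm) h

theorem deg_zero : deg (0 : SkewPoly 𝔽 n) = ⊥ := by simp [deg]

theorem deg_single {m : FreeMonoid (Fin n)} {c : 𝔽} (hc : c ≠ 0) :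
    deg (Finsupp.single m c : SkewPoly 𝔽 n) = (FreeMonoid.length m : WithBot ℕ) := by
  rw [deg, Finsupp.support_single_ne_zero _ hc, Finset.sup_singleton]

theorem deg_X (i : Fin n) : deg (X 𝔽 i) = (1 : WithBot ℕ) := by
  rw [X, deg_single one_ne_zero, FreeMonoid.length_of]; rfl

theorem deg_C {c : 𝔽} (hc : c ≠ 0) : deg (C n c) = (0 : WithBot ℕ) := by
  rw [C, deg_single hc, FreeMonoid.length_one, Nat.cast_zero]

theorem one_add_lt' {x : WithBot ℕ} {d : ℕ} (h : x < (d : WithBot ℕ)) :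
    1 + x < ((d + 1 : ℕ) : WithBot ℕ) := by
  have h1 : ((d+1 : ℕ) : WithBot ℕ) = 1 + (d : WithBot ℕ) := by push_cast; ring
  rw [h1]
  exact WithBot.add_lt_add_left (by exact WithBot.one_ne_bot) h

/-! ### Easy ring lemmas -/

theorem zero_mul' (S : RawMul 𝔽 n) (F : SkewPoly 𝔽 n) : S.mul 0 F = 0 := by
  have h := S.add_mul 0 0 F
  rw [add_zero] at h
  exact (add_eq_left.mp h.symm)

theorem mul_zero' (S : RawMul 𝔽 n) (F : SkewPoly 𝔽 n) : S.mul F 0 = 0 := by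
  have h := S.mul_add F 0 0
  rw [add_zero] at h
  exact (add_eq_left.mp h.symm)

theorem mul_neg' (S : RawMul 𝔽 n) (F G : SkewPoly 𝔽 n) : S.mul F (-G) = -(S.mul F G) := by
  have h := S.mul_add F G (-G)
  rw [add_neg_cancel, mul_zero'] at h
  exact (eq_neg_of_add_eq_zero_right h.symm)

theorem neg_mul' (S : RawMul 𝔽 n) (F G : SkewPoly 𝔽 n) : S.mul (-F) G = -(S.mul F G) := by
  have h := S.add_mul F (-F) G
  rw [add_neg_cancel, zero_mul'] at h
  exact (eq_neg_of_add_eq_zero_right h.symm)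

theorem mul_sub' (S : RawMul 𝔽 n) (F G H : SkewPoly 𝔽 n) :
    S.mul F (G - H) = S.mul F G - S.mul F H := by
  rw [sub_eq_add_neg, S.mul_add, mul_neg', sub_eq_add_neg]

theorem sub_mul' (S : RawMul 𝔽 n) (F G H : SkewPoly 𝔽 n) :
    S.mul (F - G) H = S.mul F H - S.mul G H := by
  rw [sub_eq_add_neg, S.add_mul, neg_mul', sub_eq_add_neg]

theorem smul_mul' (S : RawMul 𝔽 n) (c : 𝔽) (F G : SkewPoly 𝔽 n) :
    S.mul (c • F) G = c • S.mul F G := by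
  rw [← S.const_mul, ← S.const_mul, S.mul_assoc]

theorem mul_sum' (S : RawMul 𝔽 n) {ι : Type*} (s : Finset ι) (F : SkewPoly 𝔽 n)
    (g : ι → SkewPoly 𝔽 n) : S.mul F (∑ i ∈ s, g i) = ∑ i ∈ s, S.mul F (g i) := by
  classical
  induction s using Finset.induction_on with
  | empty => simp [mul_zero']
  | insert a s hx ih => rw [Finset.sum_insert hx, S.mul_add, ih, Finset.sum_insert hx]

theorem sum_mul' (S : RawMul 𝔽 n) {ι : Type*} (s : Finset ι) (g : ι → SkewPoly 𝔽 n)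
    (F : SkewPoly 𝔽 n) : S.mul (∑ i ∈ s, g i) F = ∑ i ∈ s, S.mul (g i) F := by
  classical
  induction s using Finset.induction_on with
  | empty => simp [zero_mul']
  | insert a s hx ih => rw [Finset.sum_insert hx, S.add_mul, ih, Finset.sum_insert hx]

theorem single_eq_smul_single (m : FreeMonoid (Fin n)) (c : 𝔽) :
    (Finsupp.single m c : SkewPoly 𝔽 n) = c • Finsupp.single m 1 := by
  rw [Finsupp.smul_single', mul_one]

theorem mul_single_one_X (S : RawMul 𝔽 n) (m : FreeMonoid (Fin n)) (i : Fin n) :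
    S.mul (Finsupp.single m (1:𝔽)) (X 𝔽 i) = Finsupp.single (m * FreeMonoid.of i) 1 :=
  S.mono_mul_mono m (FreeMonoid.of i)

/-- Right-multiplication by `xᵢ` just appends `xᵢ` to every word. -/
def appendEmb (i : Fin n) : FreeMonoid (Fin n) ↪ FreeMonoid (Fin n) :=
  ⟨fun m => m * FreeMonoid.of i, fun m m' h => mul_right_cancel h⟩

theorem mul_X_eq_embDomain (S : RawMul 𝔽 n) (F : SkewPoly 𝔽 n) (i : Fin n) :
    S.mul F (X 𝔽 i) = Finsupp.embDomain (appendEmb i) F := by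
  induction F using Finsupp.induction with
  | zero => rw [zero_mul']; simp
  | single_add m c F hms hc ih =>
    rw [S.add_mul, ih, Finsupp.embDomain_add, Finsupp.embDomain_single,
      single_eq_smul_single, smul_mul', mul_single_one_X, ← single_eq_smul_single]
    rfl

end SkewPoly
namespace SkewPoly

variable {𝔽 : Type*} [DivisionRing 𝔽] {n : ℕ}

/-- Coefficients of `F * C e` live on words no longer than those of `F`. -/
theorem mul_C_coeff_zero (S : RawMul 𝔽 n) (F : SkewPoly 𝔽 n) (e : 𝔽) {d : ℕ}
    (hF : ∀ m ∈ F.support, FreeMonoid.length m ≤ d)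
    {w : FreeMonoid (Fin n)} (hw : d < FreeMonoid.length w) :
    (S.mul F (C n e)) w = 0 := by
  by_cases hF0 : F = 0
  · rw [hF0, zero_mul']; rfl
  by_cases he : e = 0
  · rw [he]
    have : C n (0:𝔽) = 0 := Finsupp.single_zero 1
    rw [this, mul_zero']; rfl
  · have hC : C n e ≠ 0 := by
      rw [C]; intro h0; exact he (Finsupp.single_eq_zero.mp h0)
    have hdeg : deg (S.mul F (C n e)) = deg F := by
      rw [S.deg_mul F _ hF0 hC, deg_C he, add_zero]
    apply Finsupp.notMem_support_iff.mp
    intro hmem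
    have h1 : ((FreeMonoid.length w : ℕ) : WithBot ℕ) ≤ (d : WithBot ℕ) := by
      calc ((FreeMonoid.length w : ℕ) : WithBot ℕ) ≤ deg (S.mul F (C n e)) := le_deg hmem
      _ = deg F := hdeg
      _ ≤ (d : WithBot ℕ) := deg_le hF
    exact absurd (by exact_mod_cast h1) (not_le.mpr hw)

/-- If a left combination of the `xᵢ - aᵢ` is a constant, the constant is zero. -/
theorem const_eq_zero (S : RawMul 𝔽 n) (a : Fin n → 𝔽)
    (G : Fin n → SkewPoly 𝔽 n) {c : 𝔽}
    (h : (∑ i : Fin n, S.mul (G i) (X 𝔽 i - C n (a i))) = C n c) : c = 0 := by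
  classical
  by_cases hG : ∀ i, G i = 0
  · simp only [hG, zero_mul', Finset.sum_const_zero] at h
    have := h.symm
    rw [C] at this
    exact (Finsupp.single_eq_zero.mp this)
  · exfalso
    push_neg at hG
    obtain ⟨i0, hi0⟩ := hG
    set d := Finset.univ.sup (fun i : Fin n => (G i).support.sup FreeMonoid.length) with hd
    -- find a maximizing pair
    obtain ⟨i2, m0, hm0, hlen⟩ :
        ∃ i2 m0, m0 ∈ (G i2).support ∧ FreeMonoid.length m0 = d := by
      obtain ⟨i1, _, hi1⟩ := Finset.exists_mem_eq_sup Finset.univ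
        ⟨i0, Finset.mem_univ i0⟩ (fun i : Fin n => (G i).support.sup FreeMonoid.length)
      by_cases hne : (G i1).support.Nonempty
      · obtain ⟨m1, hm1, hm1s⟩ := Finset.exists_mem_eq_sup _ hne FreeMonoid.length
        exact ⟨i1, m1, hm1, by rw [hd, hi1, hm1s]⟩
      · have hz : (G i1).support.sup FreeMonoid.length = 0 := by
          rw [Finset.not_nonempty_iff_eq_empty.mp hne]; rfl
        have hd0 : d = 0 := by rw [hd, hi1, hz]
        obtain ⟨m1, hm1⟩ := Finsupp.support_nonempty_iff.mpr hi0
        refine ⟨i0, m1, hm1, ?_⟩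
        have h1 : FreeMonoid.length m1 ≤ (G i0).support.sup FreeMonoid.length :=
          Finset.le_sup hm1
        have h2 : (G i0).support.sup FreeMonoid.length ≤ d :=
          le_trans (Finset.le_sup (f := fun i : Fin n => (G i).support.sup FreeMonoid.length)
            (Finset.mem_univ i0)) (le_of_eq hd.symm)
        omega
    -- the witness word
    set w := m0 * FreeMonoid.of i2 with hw
    have hlw : FreeMonoid.length w = d + 1 := by
      rw [hw, FreeMonoid.length_mul, FreeMonoid.length_of, hlen]
    -- rewrite the sum
    have h2 : (∑ i : Fin n, S.mul (G i) (X 𝔽 i)) - (∑ i : Fin n, S.mul (G i) (C n (a i)))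
        = C n c := by
      rw [← Finset.sum_sub_distrib, ← h]
      exact Finset.sum_congr rfl fun i _ => (mul_sub' S _ _ _).symm
    have h3 := DFunLike.congr_fun h2 w
    rw [Finsupp.sub_apply, Finsupp.finset_sum_apply, Finsupp.finset_sum_apply] at h3
    -- first sum: only i2 contributes, giving G i2 m0
    have h4 : ∑ i : Fin n, (S.mul (G i) (X 𝔽 i)) w = G i2 m0 := by
      rw [Finset.sum_eq_single i2]
      · rw [mul_X_eq_embDomain]
        have : w = appendEmb i2 m0 := rfl
        rw [this, Finsupp.embDomain_apply_self]
      · intro i _ hii2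
        rw [mul_X_eq_embDomain]
        apply Finsupp.embDomain_notin_range
        rintro ⟨m, hm⟩
        have hlists := congrArg FreeMonoid.toList (show m * FreeMonoid.of i = w from hm)
        simp only [appendEmb, Function.Embedding.coeFn_mk, hw, FreeMonoid.toList_mul,
          FreeMonoid.toList_of] at hlists
        have hlast := congrArg List.getLast? hlists
        rw [List.getLast?_concat, List.getLast?_concat] at hlast
        exact hii2 (by injection hlast)
      · intro hni; exact absurd (Finset.mem_univ i2) hni
    -- second sum: all coefficients vanish
    have h5 : ∑ i : Fin n, (S.mul (G i) (C n (a i))) w = 0 := by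
      apply Finset.sum_eq_zero
      intro i _
      apply mul_C_coeff_zero S (G i) (a i) (d := d)
      · intro m hm
        calc FreeMonoid.length m ≤ (G i).support.sup FreeMonoid.length := Finset.le_sup hm
        _ ≤ d := le_trans (Finset.le_sup (f := fun i : Fin n => (G i).support.sup
            FreeMonoid.length) (Finset.mem_univ i)) (le_of_eq hd.symm)
      · omega
    -- RHS coefficient is zero
    have h6 : (C n c) w = 0 := by
      rw [C]
      apply Finsupp.single_eq_of_ne
      intro h1w
      have := congrArg FreeMonoid.length h1w
      rw [FreeMonoid.length_one, hlw] at this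
      omega
    rw [h4, h5, h6, sub_zero] at h3
    exact (Finsupp.mem_support_iff.mp hm0) h3

theorem decomposes_unique {S : RawMul 𝔽 n} {a : Fin n → 𝔽} {F : SkewPoly 𝔽 n} {b b' : 𝔽}
    (h1 : Decomposes S a F b) (h2 : Decomposes S a F b') : b = b' := by
  obtain ⟨G, hGe⟩ := h1
  obtain ⟨G', hGe'⟩ := h2
  have h : (∑ i : Fin n, S.mul ((G - G') i) (X 𝔽 i - C n (a i))) = C n (b' - b) := by
    have heq := hGe.symm.trans hGe'
    have hsum : (∑ i : Fin n, S.mul ((G - G') i) (X 𝔽 i - C n (a i)))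
        = (∑ i : Fin n, S.mul (G i) (X 𝔽 i - C n (a i)))
          - (∑ i : Fin n, S.mul (G' i) (X 𝔽 i - C n (a i))) := by
      rw [← Finset.sum_sub_distrib]
      exact Finset.sum_congr rfl fun i _ => by
        rw [Pi.sub_apply, sub_mul']
    have hC : C n (b' - b) = C n b' - C n b := Finsupp.single_sub 1 b' b
    rw [hsum, hC, sub_eq_sub_iff_add_eq_add, heq, add_comm]
  have h0 := const_eq_zero S a (G - G') h
  exact (sub_eq_zero.mp h0).symm

end SkewPoly
namespace SkewPoly

variable {𝔽 : Type*} [DivisionRing 𝔽] {n : ℕ}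

theorem decomposes_C (S : RawMul 𝔽 n) (a : Fin n → 𝔽) (c : 𝔽) :
    Decomposes S a (C n c) c :=
  ⟨0, by simp only [Pi.zero_apply, zero_mul', Finset.sum_const_zero, zero_add]⟩

theorem decomposes_add {S : RawMul 𝔽 n} {a : Fin n → 𝔽} {F F' : SkewPoly 𝔽 n} {c c' : 𝔽}
    (h : Decomposes S a F c) (h' : Decomposes S a F' c') :
    Decomposes S a (F + F') (c + c') := by
  obtain ⟨G, hG⟩ := h
  obtain ⟨G', hG'⟩ := h'
  refine ⟨G + G', ?_⟩
  have hCadd : C n (c + c') = C n c + C n c' := Finsupp.single_add 1 c c'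
  have hs : (∑ i : Fin n, S.mul ((G + G') i) (X 𝔽 i - C n (a i)))
      = (∑ i : Fin n, S.mul (G i) (X 𝔽 i - C n (a i)))
        + (∑ i : Fin n, S.mul (G' i) (X 𝔽 i - C n (a i))) := by
    rw [← Finset.sum_add_distrib]
    exact Finset.sum_congr rfl fun i _ => by rw [Pi.add_apply, S.add_mul]
  rw [hG, hG', hCadd, hs]
  abel

theorem decomposes_smul {S : RawMul 𝔽 n} {a : Fin n → 𝔽} {F : SkewPoly 𝔽 n} {c : 𝔽}
    (e : 𝔽) (h : Decomposes S a F c) : Decomposes S a (e • F) (e * c) := by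
  obtain ⟨G, hG⟩ := h
  refine ⟨fun i => e • G i, ?_⟩
  have h1 : e • F = S.mul (C n e) F := (S.const_mul e F).symm
  rw [h1, hG, S.mul_add, mul_sum' S]
  have h2 : ∀ i : Fin n, S.mul (C n e) (S.mul (G i) (X 𝔽 i - C n (a i)))
      = S.mul (e • G i) (X 𝔽 i - C n (a i)) := fun i => by
    rw [← S.mul_assoc, S.const_mul]
  have h3 : S.mul (C n e) (C n c) = C n (e * c) := by
    rw [S.const_mul]
    show e • (Finsupp.single 1 c : SkewPoly 𝔽 n) = Finsupp.single 1 (e * c)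
    rw [Finsupp.smul_single']
  rw [Finset.sum_congr rfl fun i _ => h2 i, h3]

theorem decomposes_neg {S : RawMul 𝔽 n} {a : Fin n → 𝔽} {F : SkewPoly 𝔽 n} {c : 𝔽}
    (h : Decomposes S a F c) : Decomposes S a (-F) (-c) := by
  have := decomposes_smul (-1 : 𝔽) h
  rw [neg_one_smul, neg_one_mul] at this
  exact this

theorem decomposes_sub {S : RawMul 𝔽 n} {a : Fin n → 𝔽} {F F' : SkewPoly 𝔽 n} {c c' : 𝔽}
    (h : Decomposes S a F c) (h' : Decomposes S a F' c') :
    Decomposes S a (F - F') (c - c') := by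
  rw [sub_eq_add_neg, sub_eq_add_neg]
  exact decomposes_add h (decomposes_neg h')

theorem decomposes_mul_X {σ : 𝔽 → Matrix (Fin n) (Fin n) 𝔽} {δ : 𝔽 → Fin n → 𝔽}
    {S : RawMul 𝔽 n} (hS : HasCommRule S σ δ) {a : Fin n → 𝔽} {F : SkewPoly 𝔽 n} {c : 𝔽}
    (i : Fin n) (h : Decomposes S a F c) :
    Decomposes S a (S.mul (X 𝔽 i) F) ((σ c *ᵥ a) i + δ c i) := by
  obtain ⟨G, hG⟩ := h
  refine ⟨fun k => S.mul (X 𝔽 i) (G k) + C n (σ c i k), ?_⟩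
  have expand : S.mul (X 𝔽 i) F
      = (∑ k : Fin n, S.mul (S.mul (X 𝔽 i) (G k)) (X 𝔽 k - C n (a k)))
        + S.mul (X 𝔽 i) (C n c) := by
    rw [hG, S.mul_add, mul_sum' S]
    congr 1
    exact Finset.sum_congr rfl fun k _ => (S.mul_assoc _ _ _).symm
  have hXc : S.mul (X 𝔽 i) (C n c)
      = (∑ k : Fin n, S.mul (C n (σ c i k)) (X 𝔽 k - C n (a k)))
        + C n ((σ c *ᵥ a) i + δ c i) := by
    rw [hS i c]
    have h1 : ∀ k : Fin n, (Finsupp.single (FreeMonoid.of k) (σ c i k) : SkewPoly 𝔽 n)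
        = S.mul (C n (σ c i k)) (X 𝔽 k - C n (a k)) + C n (σ c i k * a k) := fun k => by
      rw [mul_sub' S, S.const_mul, S.const_mul]
      show (Finsupp.single (FreeMonoid.of k) (σ c i k) : SkewPoly 𝔽 n)
          = σ c i k • Finsupp.single (FreeMonoid.of k) (1:𝔽)
            - σ c i k • Finsupp.single (1 : FreeMonoid (Fin n)) (a k)
            + Finsupp.single (1 : FreeMonoid (Fin n)) (σ c i k * a k)
      rw [Finsupp.smul_single', Finsupp.smul_single', mul_one]
      abel
    rw [Finset.sum_congr rfl fun k _ => h1 k, Finset.sum_add_distrib]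
    have h2 : C n ((σ c *ᵥ a) i + δ c i)
        = (∑ k : Fin n, C n (σ c i k * a k)) + C n (δ c i) := by
      have hmv : (σ c *ᵥ a) i = ∑ k : Fin n, σ c i k * a k := by
        simp [Matrix.mulVec, dotProduct]
      rw [hmv, C, Finsupp.single_add]
      congr 1
      rw [Finsupp.single_finset_sum]
      rfl
    rw [h2]
    abel
  rw [expand, hXc]
  have h3 : ∀ k : Fin n, S.mul (S.mul (X 𝔽 i) (G k) + C n (σ c i k)) (X 𝔽 k - C n (a k))
      = S.mul (S.mul (X 𝔽 i) (G k)) (X 𝔽 k - C n (a k))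
        + S.mul (C n (σ c i k)) (X 𝔽 k - C n (a k)) := fun k => S.add_mul _ _ _
  rw [Finset.sum_congr rfl fun k _ => h3 k, Finset.sum_add_distrib]
  abel

theorem decomposes_single_one {σ : 𝔽 → Matrix (Fin n) (Fin n) 𝔽} {δ : 𝔽 → Fin n → 𝔽}
    {S : RawMul 𝔽 n} (hS : HasCommRule S σ δ) (a : Fin n → 𝔽) (m : FreeMonoid (Fin n)) :
    ∃ c : 𝔽, Decomposes S a (Finsupp.single m (1:𝔽)) c := by
  induction m using FreeMonoid.recOn with
  | one => exact ⟨1, decomposes_C S a 1⟩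
  | of_mul i m ih =>
    obtain ⟨c, hc⟩ := ih
    refine ⟨(σ c *ᵥ a) i + δ c i, ?_⟩
    have hmm : (Finsupp.single (FreeMonoid.of i * m) (1:𝔽) : SkewPoly 𝔽 n)
        = S.mul (X 𝔽 i) (Finsupp.single m 1) := by
      rw [X, S.mono_mul_mono]
    rw [hmm]
    exact decomposes_mul_X hS i hc

theorem decomposes_exists' {σ : 𝔽 → Matrix (Fin n) (Fin n) 𝔽} {δ : 𝔽 → Fin n → 𝔽}
    {S : RawMul 𝔽 n} (hS : HasCommRule S σ δ) (a : Fin n → 𝔽) (F : SkewPoly 𝔽 n) :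
    ∃ c : 𝔽, Decomposes S a F c := by
  induction F using Finsupp.induction with
  | zero =>
    refine ⟨0, ?_⟩
    have : C n (0:𝔽) = 0 := Finsupp.single_zero 1
    exact this ▸ decomposes_C S a 0
  | single_add m e F hms he ih =>
    obtain ⟨c, hc⟩ := ih
    obtain ⟨c1, hc1⟩ := decomposes_single_one hS a m
    refine ⟨e * c1 + c, ?_⟩
    have h1 : (Finsupp.single m e : SkewPoly 𝔽 n) = e • Finsupp.single m 1 :=
      single_eq_smul_single m e
    rw [h1]
    exact decomposes_add (decomposes_smul e hc1) hc

/-! ### eval -/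

theorem eval_eq_of_decomposes {S : RawMul 𝔽 n} {a : Fin n → 𝔽} {F : SkewPoly 𝔽 n} {c : 𝔽}
    (h : Decomposes S a F c) : eval S a F = c := by
  rw [eval]
  split
  · next hex => exact decomposes_unique hex.choose_spec h
  · next hex => exact absurd ⟨c, h⟩ hex

theorem eval_C {S : RawMul 𝔽 n} (a : Fin n → 𝔽) (c : 𝔽) : eval S a (C n c) = c :=
  eval_eq_of_decomposes (decomposes_C S a c)

theorem decomposes_eval {σ : 𝔽 → Matrix (Fin n) (Fin n) 𝔽} {δ : 𝔽 → Fin n → 𝔽}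
    {S : RawMul 𝔽 n} (hS : HasCommRule S σ δ) (a : Fin n → 𝔽) (F : SkewPoly 𝔽 n) :
    Decomposes S a F (eval S a F) := by
  obtain ⟨c, hc⟩ := decomposes_exists' hS a F
  rw [eval_eq_of_decomposes hc]
  exact hc

theorem eval_add {σ : 𝔽 → Matrix (Fin n) (Fin n) 𝔽} {δ : 𝔽 → Fin n → 𝔽}
    {S : RawMul 𝔽 n} (hS : HasCommRule S σ δ) (a : Fin n → 𝔽) (F F' : SkewPoly 𝔽 n) :
    eval S a (F + F') = eval S a F + eval S a F' :=
  eval_eq_of_decomposes (decomposes_add (decomposes_eval hS a F) (decomposes_eval hS a F'))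

theorem eval_sub {σ : 𝔽 → Matrix (Fin n) (Fin n) 𝔽} {δ : 𝔽 → Fin n → 𝔽}
    {S : RawMul 𝔽 n} (hS : HasCommRule S σ δ) (a : Fin n → 𝔽) (F F' : SkewPoly 𝔽 n) :
    eval S a (F - F') = eval S a F - eval S a F' :=
  eval_eq_of_decomposes (decomposes_sub (decomposes_eval hS a F) (decomposes_eval hS a F'))

theorem eval_smul {σ : 𝔽 → Matrix (Fin n) (Fin n) 𝔽} {δ : 𝔽 → Fin n → 𝔽}
    {S : RawMul 𝔽 n} (hS : HasCommRule S σ δ) (a : Fin n → 𝔽) (e : 𝔽) (F : SkewPoly 𝔽 n) :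
    eval S a (e • F) = e * eval S a F :=
  eval_eq_of_decomposes (decomposes_smul e (decomposes_eval hS a F))

theorem eval_mul_X {σ : 𝔽 → Matrix (Fin n) (Fin n) 𝔽} {δ : 𝔽 → Fin n → 𝔽}
    {S : RawMul 𝔽 n} (hS : HasCommRule S σ δ) (a : Fin n → 𝔽) (i : Fin n) (F : SkewPoly 𝔽 n) :
    eval S a (S.mul (X 𝔽 i) F) = (σ (eval S a F) *ᵥ a) i + δ (eval S a F) i :=
  eval_eq_of_decomposes (decomposes_mul_X hS i (decomposes_eval hS a F))

end SkewPoly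
namespace SkewPoly

variable {𝔽 : Type*} [DivisionRing 𝔽] {n : ℕ}

/-- Evaluation at the points `b j`, as a left-linear map. -/
noncomputable def evalLM {σ : 𝔽 → Matrix (Fin n) (Fin n) 𝔽} {δ : 𝔽 → Fin n → 𝔽}
    {S : RawMul 𝔽 n} (hS : HasCommRule S σ δ) {M : ℕ} (b : Fin M → (Fin n → 𝔽)) :
    SkewPoly 𝔽 n →ₗ[𝔽] (Fin M → 𝔽) where
  toFun := fun F j => eval S (b j) F
  map_add' := fun F F' => funext fun j => eval_add hS (b j) F F'
  map_smul' := fun e F => funext fun j => eval_smul hS (b j) e F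

theorem evalLM_apply {σ : 𝔽 → Matrix (Fin n) (Fin n) 𝔽} {δ : 𝔽 → Fin n → 𝔽}
    {S : RawMul 𝔽 n} (hS : HasCommRule S σ δ) {M : ℕ} (b : Fin M → (Fin n → 𝔽))
    (F : SkewPoly 𝔽 n) (j : Fin M) : evalLM hS b F j = eval S (b j) F := rfl

/-- Polynomials of degree `< d`, as a submodule. -/
noncomputable def degLT (𝔽 : Type*) [DivisionRing 𝔽] (n : ℕ) (d : ℕ) :
    Submodule 𝔽 (SkewPoly 𝔽 n) where
  carrier := {F | deg F < (d : WithBot ℕ)}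
  add_mem' := by
    classical
    intro F G hF hG
    refine deg_lt fun m hm => ?_
    rcases Finset.mem_union.mp (Finsupp.support_add hm) with h | h
    · exact lt_of_deg_lt hF m h
    · exact lt_of_deg_lt hG m h
  zero_mem' := by
    show deg (0 : SkewPoly 𝔽 n) < _
    rw [deg_zero]; exact WithBot.bot_lt_coe d
  smul_mem' := by
    intro e F hF
    refine deg_lt fun m hm => lt_of_deg_lt hF m (Finsupp.support_smul hm)

theorem mem_degLT {d : ℕ} {F : SkewPoly 𝔽 n} : F ∈ degLT 𝔽 n d ↔ deg F < (d : WithBot ℕ) := by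
  constructor <;> (intro h; exact h)

theorem single_mem_degLT {d : ℕ} {m : FreeMonoid (Fin n)} (h : FreeMonoid.length m < d) :
    (Finsupp.single m (1:𝔽) : SkewPoly 𝔽 n) ∈ degLT 𝔽 n d := by
  rw [mem_degLT, deg_single one_ne_zero]
  exact_mod_cast h

theorem degLT_mono {d e : ℕ} (h : d ≤ e) : degLT 𝔽 n d ≤ degLT 𝔽 n e := by
  intro F hF
  rw [mem_degLT] at hF ⊢
  exact lt_of_lt_of_le hF (by exact_mod_cast h)

/-- The key existence theorem: each coordinate vector `eᵢ` is the evaluation vector of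
a skew polynomial of degree `< M`. -/
theorem dual_exists {σ : 𝔽 → Matrix (Fin n) (Fin n) 𝔽} {δ : 𝔽 → Fin n → 𝔽}
    {S : RawMul 𝔽 n} (hS : HasCommRule S σ δ)
    {M : ℕ} {b : Fin M → (Fin n → 𝔽)} (hbinj : Function.Injective b)
    (hPI : PIndep S (Set.range b)) (i : Fin M) :
    ∃ F : SkewPoly 𝔽 n, deg F < (M : WithBot ℕ) ∧
      ∀ j : Fin M, eval S (b j) F = if i = j then 1 else 0 := by
  classical
  set Lm := evalLM hS b with hLm
  set W : ℕ → Submodule 𝔽 (Fin M → 𝔽) := fun d => (degLT 𝔽 n d).map Lm with hW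
  have hmono : ∀ d e : ℕ, d ≤ e → W d ≤ W e := fun d e h =>
    Submodule.map_mono (degLT_mono h)
  -- stabilization step
  have hstab : ∀ d : ℕ, W (d+1) ≤ W d → W (d+2) ≤ W (d+1) := by
    intro d hle v hv
    obtain ⟨F, hF, rfl⟩ := Submodule.mem_map.mp hv
    have hFs : F = ∑ m ∈ F.support, (F m) • (Finsupp.single m (1:𝔽) : SkewPoly 𝔽 n) := by
      conv_lhs => rw [← Finsupp.sum_single F]
      rw [Finsupp.sum]
      exact Finset.sum_congr rfl fun m _ => single_eq_smul_single m (F m)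
    rw [hFs, map_sum]
    apply Submodule.sum_mem
    intro m hm
    rw [LinearMap.map_smul]
    apply Submodule.smul_mem
    have hmlen : FreeMonoid.length m < d + 2 := lt_of_deg_lt (mem_degLT.mp hF) m hm
    by_cases hlen : FreeMonoid.length m < d + 1
    · exact Submodule.mem_map_of_mem (single_mem_degLT hlen)
    · have hmd : FreeMonoid.length m = d + 1 := by omega
      obtain ⟨i0, m', rfl⟩ : ∃ i0 m'', m = FreeMonoid.of i0 * m'' := by
        rcases hm2 : FreeMonoid.toList m with _ | ⟨i0, t⟩
        · exfalso
          have hone := FreeMonoid.ofList_toList m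
          rw [hm2] at hone
          rw [← hone] at hmd
          have hz : FreeMonoid.length (FreeMonoid.ofList ([] : List (Fin n))) = 0 := rfl
          omega
        · refine ⟨i0, FreeMonoid.ofList t, ?_⟩
          have hone := FreeMonoid.ofList_toList m
          rw [hm2] at hone
          exact hone.symm
      have hm'len : FreeMonoid.length m' = d := by
        rw [FreeMonoid.length_mul, FreeMonoid.length_of] at hmd
        omega
      have h1 : Lm (Finsupp.single m' (1:𝔽)) ∈ W d :=
        hle (Submodule.mem_map_of_mem (single_mem_degLT (by omega)))
      obtain ⟨H, hHdeg, hHeq⟩ := Submodule.mem_map.mp h1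
      rw [mem_degLT] at hHdeg
      refine Submodule.mem_map.mpr ⟨S.mul (X 𝔽 i0) H, ?_, ?_⟩
      · rw [mem_degLT]
        by_cases hH0 : H = 0
        · rw [hH0, mul_zero', deg_zero]; exact WithBot.bot_lt_coe _
        · have hX0 : X 𝔽 i0 ≠ (0 : SkewPoly 𝔽 n) := by
            rw [X]; intro h0; exact one_ne_zero (Finsupp.single_eq_zero.mp h0)
          rw [S.deg_mul _ _ hX0 hH0, deg_X]
          exact one_add_lt' hHdeg
      · funext j
        have hHj : eval S (b j) H = eval S (b j) (Finsupp.single m' (1:𝔽)) :=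
          congrFun hHeq j
        show eval S (b j) (S.mul (X 𝔽 i0) H)
            = eval S (b j) (Finsupp.single (FreeMonoid.of i0 * m') 1)
        have hsm : (Finsupp.single (FreeMonoid.of i0 * m') (1:𝔽) : SkewPoly 𝔽 n)
            = S.mul (X 𝔽 i0) (Finsupp.single m' 1) := by
          rw [X, S.mono_mul_mono]
        rw [hsm, eval_mul_X hS, eval_mul_X hS, hHj]
  -- iterated stabilization
  have hchain : ∀ d : ℕ, W (d+1) ≤ W d → ∀ k : ℕ, W (d+k) ≤ W d := by
    intro d h
    have step : ∀ k : ℕ, W (d+k+1) ≤ W (d+k) := by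
      intro k
      induction k with
      | zero => exact h
      | succ k ih => exact hstab (d+k) ih
    intro k
    induction k with
    | zero => exact le_refl _
    | succ k ih => exact le_trans (step k) ih
  -- if stabilized at d, every evaluation vector lies in W d
  have hall : ∀ d : ℕ, W (d+1) ≤ W d → ∀ F : SkewPoly 𝔽 n, Lm F ∈ W d := by
    intro d h F
    have hFmem : F ∈ degLT 𝔽 n (d + (F.support.sup FreeMonoid.length + 1)) := by
      rw [mem_degLT]
      refine deg_lt fun m hm => ?_
      have := Finset.le_sup (f := FreeMonoid.length) hm
      omega
    exact hchain d h _ (Submodule.mem_map_of_mem hFmem)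
  -- from P-independence: each eᵢ is an evaluation vector
  have hsingleton : ∃ F0 : SkewPoly 𝔽 n, Lm F0 = Pi.single i 1 := by
    have hnotin := hPI (b i) ⟨i, rfl⟩
    simp only [pClosure, Set.mem_setOf_eq] at hnotin
    push_neg at hnotin
    obtain ⟨F0, hF0mem, hF0ne⟩ := hnotin
    refine ⟨(eval S (b i) F0)⁻¹ • F0, ?_⟩
    funext j
    rw [hLm, evalLM_apply, eval_smul hS]
    by_cases hj : j = i
    · subst hj
      rw [inv_mul_cancel₀ hF0ne, Pi.single_eq_same]
    · have hbj : b j ∈ Set.range b \ {b i} := by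
        refine ⟨⟨j, rfl⟩, ?_⟩
        simp only [Set.mem_singleton_iff]
        intro heq
        exact hj (hbinj heq)
      rw [hF0mem (b j) hbj, mul_zero, Pi.single_eq_of_ne hj]
  -- conclude that eᵢ ∈ W M
  have hfin : Pi.single i (1:𝔽) ∈ W M := by
    by_cases hcase : ∃ d, d < M ∧ W (d+1) ≤ W d
    · obtain ⟨d, hdM, hle⟩ := hcase
      obtain ⟨F0, hF0⟩ := hsingleton
      exact hmono d M (le_of_lt hdM) (hF0 ▸ hall d hle F0)
    · haveI : Module.Finite 𝔽 (Fin M → 𝔽) := Module.Finite.pi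
      push_neg at hcase
      have hlt : ∀ d, d < M → W d < W (d+1) := fun d hd =>
        lt_of_le_not_ge (hmono d (d+1) (by omega)) (hcase d hd)
      have hrank : ∀ d, d ≤ M → d ≤ Module.finrank 𝔽 (W d) := by
        intro d
        induction d with
        | zero => exact fun _ => Nat.zero_le _
        | succ d ih =>
          intro hdm
          have h1 := ih (by omega)
          haveI := FiniteDimensional.finiteDimensional_submodule (K := 𝔽) (W (d+1))
          have h2 := Submodule.finrank_lt_finrank_of_lt (hlt d (by omega))
          omega
      have hM : M ≤ Module.finrank 𝔽 (W M) := hrank M le_rfl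
      have hle : Module.finrank 𝔽 (W M) ≤ M := by
        have := Submodule.finrank_le (W M)
        rwa [Module.finrank_fin_fun] at this
      have htop : W M = ⊤ := Submodule.eq_top_of_finrank_eq (by
        rw [Module.finrank_fin_fun]; omega)
      rw [htop]
      trivial
  obtain ⟨F, hFdeg, hFeq⟩ := Submodule.mem_map.mp hfin
  rw [mem_degLT] at hFdeg
  refine ⟨F, hFdeg, fun j => ?_⟩
  have hj := congrFun hFeq j
  rw [hLm, evalLM_apply] at hj
  rw [hj, Pi.single_apply]
  by_cases h : i = j
  · simp [h]
  · simp [h, Ne.symm h]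

end SkewPoly

/-- Every finite P-basis `b₁, …, b_M` of a P-closed set admits a dual
P-basis of skew polynomials of degree `< M`, and any two dual P-bases of the same
P-basis define the same functions on `Ω`. -/
theorem stmt13 {𝔽 : Type*} [DivisionRing 𝔽] {n : ℕ} (hn : 0 < n)
    (σ : 𝔽 → Matrix (Fin n) (Fin n) 𝔽) (δ : 𝔽 → Fin n → 𝔽)
    (hσ : IsMatrixMorphism σ) (hδ : IsVectorDerivation σ δ)
    (S : RawMul 𝔽 n) (hS : HasCommRule S σ δ)
    (Ω : Set (Fin n → 𝔽)) (hΩ : IsPClosed S Ω)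
    (M : ℕ) (b : Fin M → (Fin n → 𝔽)) (hbinj : Function.Injective b)
    (hB : IsPBasis S (Set.range b) Ω) :
    (∃ F : Fin M → SkewPoly 𝔽 n, (∀ i : Fin M, deg (F i) < (M : WithBot ℕ)) ∧
      ∀ i j : Fin M, eval S (b j) (F i) = if i = j then 1 else 0) ∧
    (∀ F F' : Fin M → SkewPoly 𝔽 n,
      (∀ i j : Fin M, eval S (b j) (F i) = if i = j then 1 else 0) →
      (∀ i j : Fin M, eval S (b j) (F' i) = if i = j then 1 else 0) →
      ∀ (i : Fin M), ∀ a ∈ Ω, eval S a (F i) = eval S a (F' i)) := by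
  constructor
  · have h := fun i : Fin M => dual_exists hS hbinj hB.2.1 i
    choose F hdeg heval using h
    exact ⟨F, hdeg, fun i j => heval i j⟩
  · intro F F' hF hF' i a ha
    have ha' : a ∈ pClosure S (Set.range b) := by rw [hB.2.2]; exact ha
    have hmem : (F i - F' i) ∈ zeroIdeal S (Set.range b) := by
      rintro p ⟨j, rfl⟩
      rw [eval_sub hS, hF i j, hF' i j, sub_self]
    have h0 := ha' (F i - F' i) hmem
    rw [eval_sub hS] at h0
    exact sub_eq_zero.mp h0
end
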